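/- Let K(x,y) = (1/2π)·(x−y)^⊥/|x−y|² be the 2d Biot–Savart kernel and, for m ≥ 3, let K_m(x,y) = (1/m)·Σ_{i=1}^m K(x, R_i y) where R_i is rotation by 2πi/m. Let ω ∈ L^∞(ℝ²) be m-fold symmetric with ω(y) → 0 as y → 0. If in addition |K_m(x,y)| ≤ C_m |x|^{m−1}/|y|^m for |y| ≥ 2|x|, then the velocity u(x) = ∫ K_m(x,y)ω(y)dy satisfies |u(x)|/|x| → 0 as x → 0. -/

import Mathlib

open Real Set Filter MeasureTheory Topology
open scoped ENNReal

lemma radial_val (f : ℝ → ℝ) :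
    ∫ y : ℂ, f (‖y‖) = 2 * π * ∫ r in Ioi (0:ℝ), r * f r := by
  have h := MeasureTheory.integral_fun_norm_addHaar (volume : Measure ℂ) f
  simp only [measureReal_def, Complex.finrank_real_complex, Complex.volume_ball,
    ENNReal.ofReal_one, one_pow, one_mul, ENNReal.toReal_ofNat, pow_one, smul_eq_mul,
    nsmul_eq_mul, Nat.cast_ofNat] at h
  rw [h]
  norm_num [ENNReal.coe_toReal, NNReal.coe_real_pi, mul_assoc]

lemma radial_lintegral_le (g : ℝ → ℝ) (hg : Measurable g) (hg0 : ∀ r, 0 ≤ g r) :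
    ∫⁻ y : ℂ, ENNReal.ofReal (g (‖y‖)) ≤
      ENNReal.ofReal (2 * π) * ∫⁻ r in Ioi (0:ℝ), ENNReal.ofReal (r * g r) := by
  set H : ℕ → ℂ → ℝ := fun n y =>
    (Metric.ball (0:ℂ) n).indicator (fun y => min (g (‖y‖)) n) y with hHdef
  set G : ℕ → ℝ → ℝ := fun n r => (Iio (n:ℝ)).indicator (fun r => min (g r) n) r with hGdef
  have hHG : ∀ n y, H n y = G n (‖y‖) := by
    intro n y
    by_cases hy : ‖y‖ < n
    · simp [hHdef, hGdef, indicator, Metric.mem_ball, Complex.dist_eq, sub_zero, hy]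
    · simp [hHdef, hGdef, indicator, Metric.mem_ball, Complex.dist_eq, sub_zero, hy]
  have hG0 : ∀ n r, 0 ≤ G n r := fun n r =>
    indicator_nonneg (fun r _ => le_min (hg0 r) (Nat.cast_nonneg n)) r
  have hH0 : ∀ n y, 0 ≤ H n y := fun n y =>
    indicator_nonneg (fun y _ => le_min (hg0 _) (Nat.cast_nonneg n)) y
  have hGle : ∀ n r, G n r ≤ g r := by
    intro n r
    by_cases hr : r ∈ Iio (n:ℝ)
    · simp only [hGdef, indicator_of_mem hr]; exact min_le_left _ _
    · simp only [hGdef, indicator_of_notMem hr]; exact hg0 r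
  have hGmeas : ∀ n, Measurable (G n) :=
    fun n => ((hg.min measurable_const).indicator measurableSet_Iio)
  have hHmeas : ∀ n, Measurable (H n) :=
    fun n => (((hg.comp continuous_norm.measurable).min measurable_const).indicator
      measurableSet_ball)
  have hHint : ∀ n, Integrable (H n) := by
    intro n
    refine Integrable.mono' (g := (Metric.ball (0:ℂ) n).indicator (fun _ => (n:ℝ)))
      ?_ (hHmeas n).aestronglyMeasurable (Filter.Eventually.of_forall ?_)
    · rw [integrable_indicator_iff measurableSet_ball]
      exact integrableOn_const measure_ball_lt_top.ne
    · intro y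
      by_cases hy : y ∈ Metric.ball (0:ℂ) n
      · simp only [hHdef, indicator_of_mem hy]
        rw [Real.norm_eq_abs, abs_of_nonneg (le_min (hg0 _) (Nat.cast_nonneg n))]
        exact min_le_right _ _
      · simp [hHdef, indicator_of_notMem hy]
  have hGint : ∀ n, Integrable (fun r => r * G n r) (volume.restrict (Ioi (0:ℝ))) := by
    intro n
    refine Integrable.mono' (g := (Ioo (0:ℝ) n).indicator (fun _ => (n:ℝ)*n))
      ?_ (measurable_id.mul (hGmeas n)).aestronglyMeasurable ?_
    · rw [integrable_indicator_iff measurableSet_Ioo]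
      refine integrableOn_const (ne_of_lt ?_)
      exact lt_of_le_of_lt (Measure.restrict_apply_le _ _) measure_Ioo_lt_top
    · filter_upwards [ae_restrict_mem measurableSet_Ioi] with r hr
      by_cases hrn : r < (n:ℝ)
      · have hGval : G n r = min (g r) n := indicator_of_mem hrn _
        rw [Real.norm_eq_abs, abs_of_nonneg (mul_nonneg (le_of_lt hr) (hG0 n r)),
          indicator_of_mem (show r ∈ Ioo (0:ℝ) n from ⟨hr, hrn⟩)]
        exact mul_le_mul (le_of_lt hrn) (hGval ▸ min_le_right _ _) (hG0 n r) (Nat.cast_nonneg n)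
      · have hGval : G n r = 0 := indicator_of_notMem (by simpa using hrn) _
        rw [hGval, mul_zero, norm_zero]
        exact indicator_nonneg (fun _ _ => mul_nonneg (Nat.cast_nonneg n) (Nat.cast_nonneg n)) r
  have key : ∀ n, ∫⁻ y : ℂ, ENNReal.ofReal (H n y) ≤
      ENNReal.ofReal (2 * π) * ∫⁻ r in Ioi (0:ℝ), ENNReal.ofReal (r * g r) := by
    intro n
    rw [← ofReal_integral_eq_lintegral_ofReal (hHint n)
      (Filter.Eventually.of_forall (hH0 n))]
    have hval : ∫ y, H n y = 2 * π * ∫ r in Ioi (0:ℝ), r * G n r := by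
      rw [← radial_val (G n)]
      exact integral_congr_ae (Filter.Eventually.of_forall (hHG n))
    rw [hval, ENNReal.ofReal_mul (by positivity)]
    refine mul_le_mul_right ?_ _
    calc ENNReal.ofReal (∫ r in Ioi (0:ℝ), r * G n r)
        = ∫⁻ r in Ioi (0:ℝ), ENNReal.ofReal (r * G n r) := by
          refine ofReal_integral_eq_lintegral_ofReal (hGint n) ?_
          filter_upwards [ae_restrict_mem measurableSet_Ioi] with r hr
          exact mul_nonneg (le_of_lt hr) (hG0 n r)
      _ ≤ ∫⁻ r in Ioi (0:ℝ), ENNReal.ofReal (r * g r) := by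
          refine lintegral_mono_ae ?_
          filter_upwards [ae_restrict_mem measurableSet_Ioi] with r hr
          exact ENNReal.ofReal_le_ofReal (mul_le_mul_of_nonneg_left (hGle n r) (le_of_lt hr))
  have hsup : ∀ y, ENNReal.ofReal (g (‖y‖)) = ⨆ n, ENNReal.ofReal (H n y) := by
    intro y
    apply le_antisymm
    · set n := ⌈‖y‖⌉₊ + ⌈g (‖y‖)⌉₊ + 1 with hn
      have h1 : ‖y‖ < n := by
        refine lt_of_le_of_lt (Nat.le_ceil _) ?_
        have : (⌈‖y‖⌉₊ : ℝ) < (n : ℝ) := by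
          rw [hn]; push_cast; linarith [Nat.cast_nonneg (α := ℝ) ⌈g (‖y‖)⌉₊]
        exact this
      have h2 : g (‖y‖) ≤ (n : ℝ) := by
        refine le_trans (Nat.le_ceil _) ?_
        rw [hn]; push_cast; linarith [Nat.cast_nonneg (α := ℝ) ⌈‖y‖⌉₊]
      have hval : H n y = g (‖y‖) := by
        rw [hHdef]
        simp only
        rw [indicator_of_mem (by simpa [Metric.mem_ball, Complex.dist_eq] using h1),
          min_eq_left h2]
      calc ENNReal.ofReal (g (‖y‖)) = ENNReal.ofReal (H n y) := by rw [hval]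
        _ ≤ ⨆ n, ENNReal.ofReal (H n y) := le_iSup (fun n => ENNReal.ofReal (H n y)) n
    · refine iSup_le fun n => ENNReal.ofReal_le_ofReal ?_
      rw [hHG n y]; exact hGle n _
  have hHmono : Monotone fun n => fun y => ENNReal.ofReal (H n y) := by
    intro a b hab
    intro y
    refine ENNReal.ofReal_le_ofReal ?_
    by_cases hy : y ∈ Metric.ball (0:ℂ) a
    · have hy' : y ∈ Metric.ball (0:ℂ) b :=
        Metric.ball_subset_ball (by exact_mod_cast hab) hy
      simp only [hHdef, indicator_of_mem hy, indicator_of_mem hy']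
      exact min_le_min le_rfl (by exact_mod_cast hab)
    · simp only [hHdef, indicator_of_notMem hy]
      exact hH0 b y
  calc ∫⁻ y : ℂ, ENNReal.ofReal (g (‖y‖))
      = ∫⁻ y : ℂ, ⨆ n, ENNReal.ofReal (H n y) := lintegral_congr hsup
    _ = ⨆ n, ∫⁻ y : ℂ, ENNReal.ofReal (H n y) :=
        lintegral_iSup (fun n => (hHmeas n).ennreal_ofReal) hHmono
    _ ≤ _ := iSup_le key

lemma lint_ball (R : ℝ) :
    ∫⁻ y in Metric.ball (0:ℂ) R, ENNReal.ofReal (‖y‖)⁻¹ ≤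
      ENNReal.ofReal (2 * π) * ENNReal.ofReal R := by
  set g : ℝ → ℝ := fun r => (Ico (0:ℝ) R).indicator (fun r => r⁻¹) r with hgdef
  have hg : Measurable g := measurable_inv.indicator measurableSet_Ico
  have hg0 : ∀ r, 0 ≤ g r := fun r => indicator_nonneg (fun r hr => inv_nonneg.2 hr.1) r
  have h1 : ∫⁻ y in Metric.ball (0:ℂ) R, ENNReal.ofReal (‖y‖)⁻¹ =
      ∫⁻ y : ℂ, ENNReal.ofReal (g (‖y‖)) := by
    rw [← lintegral_indicator measurableSet_ball _]
    refine lintegral_congr fun y => ?_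
    by_cases hy : y ∈ Metric.ball (0:ℂ) R
    · have hc : ‖y‖ < R := by simpa [Metric.mem_ball, Complex.dist_eq] using hy
      simp [hgdef, indicator, hy, hc]
    · have hc : ¬ ‖y‖ < R := by simpa [Metric.mem_ball, Complex.dist_eq] using hy
      simp [hgdef, indicator, hy, hc]
  rw [h1]
  refine le_trans (radial_lintegral_le g hg hg0) (mul_le_mul_right ?_ _)
  have h2 : ∀ r : ℝ, ENNReal.ofReal (r * g r) =
      (Ico (0:ℝ) R).indicator (fun r => ENNReal.ofReal (r * r⁻¹)) r := by
    intro r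
    by_cases hr : r ∈ Ico (0:ℝ) R
    · simp [hgdef, indicator, hr, hr.1, hr.2]
    · rw [mem_Ico] at hr
      simp [hgdef, indicator, hr]
  calc ∫⁻ r in Ioi (0:ℝ), ENNReal.ofReal (r * g r)
      = ∫⁻ r in Ico (0:ℝ) R ∩ Ioi (0:ℝ), ENNReal.ofReal (r * r⁻¹) := by
        rw [lintegral_congr h2, lintegral_indicator measurableSet_Ico _,
          Measure.restrict_restrict measurableSet_Ico]
    _ ≤ volume (Ico (0:ℝ) R ∩ Ioi (0:ℝ)) := by
        refine setLIntegral_le_meas (measurableSet_Ico.inter measurableSet_Ioi)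
          (t := Ico (0:ℝ) R ∩ Ioi (0:ℝ)) (fun r hr _ => ?_) (fun r hr hr' => absurd hr hr')
        rw [mul_inv_cancel₀ (ne_of_gt hr.2), ENNReal.ofReal_one]
    _ ≤ ENNReal.ofReal R := by
        refine le_trans (measure_mono inter_subset_left) ?_
        rw [Real.volume_Ico, sub_zero]

lemma lint_compl (R : ℝ) (hR : 0 < R) (m : ℕ) (hm : 3 ≤ m) :
    ∫⁻ y in (Metric.ball (0:ℂ) R)ᶜ, ENNReal.ofReal ((‖y‖ ^ m)⁻¹) ≤
      ENNReal.ofReal (2 * π) * ENNReal.ofReal (R ^ ((2:ℝ) - m) / ((m:ℝ) - 2)) := by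
  set g : ℝ → ℝ := fun r => (Ici R).indicator (fun r => (r ^ m)⁻¹) r with hgdef
  have hg : Measurable g := ((measurable_id.pow_const m).inv).indicator measurableSet_Ici
  have hg0 : ∀ r, 0 ≤ g r := fun r =>
    indicator_nonneg (fun r hr => inv_nonneg.2 (pow_nonneg (le_trans hR.le hr) m)) r
  have hm3 : (3:ℝ) ≤ m := by exact_mod_cast hm
  have h1 : ∫⁻ y in (Metric.ball (0:ℂ) R)ᶜ, ENNReal.ofReal ((‖y‖ ^ m)⁻¹) =
      ∫⁻ y : ℂ, ENNReal.ofReal (g (‖y‖)) := by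
    rw [← lintegral_indicator measurableSet_ball.compl _]
    refine lintegral_congr fun y => ?_
    by_cases hy : y ∈ (Metric.ball (0:ℂ) R)ᶜ
    · have hc : R ≤ ‖y‖ := by
        simpa [Metric.mem_ball, Complex.dist_eq, not_lt] using hy
      simp [hgdef, indicator, hy, hc]
    · have hc : ¬ R ≤ ‖y‖ := by
        simpa [Metric.mem_ball, Complex.dist_eq, not_le] using hy
      simp [hgdef, indicator, hy, hc]
  rw [h1]
  refine le_trans (radial_lintegral_le g hg hg0) (mul_le_mul_right ?_ _)
  have h2 : ∀ r : ℝ, ENNReal.ofReal (r * g r) =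
      (Ici R).indicator (fun r => ENNReal.ofReal (r * (r ^ m)⁻¹)) r := by
    intro r
    by_cases hr : r ∈ Ici R
    · simp [hgdef, indicator, hr, mem_Ici.1 hr]
    · rw [mem_Ici] at hr
      simp [hgdef, indicator, hr]
  have hIci : Ici R ∩ Ioi (0:ℝ) = Ici R :=
    inter_eq_left.2 fun r hr => lt_of_lt_of_le hR hr
  have hs : (1:ℝ) - m < -1 := by linarith
  calc ∫⁻ r in Ioi (0:ℝ), ENNReal.ofReal (r * g r)
      = ∫⁻ r in Ici R, ENNReal.ofReal (r * (r ^ m)⁻¹) := by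
        rw [lintegral_congr h2, lintegral_indicator measurableSet_Ici _,
          Measure.restrict_restrict measurableSet_Ici, hIci]
    _ = ∫⁻ r in Ioi R, ENNReal.ofReal (r * (r ^ m)⁻¹) := (setLIntegral_congr Ioi_ae_eq_Ici).symm
    _ = ∫⁻ r in Ioi R, ENNReal.ofReal (r ^ ((1:ℝ) - m)) := by
        refine setLIntegral_congr_fun measurableSet_Ioi ?_
        intro r hr
        have hr0 : 0 < r := lt_trans hR hr
        beta_reduce
        congr 1
        rw [rpow_sub hr0, rpow_one, rpow_natCast, div_eq_mul_inv]
    _ = ENNReal.ofReal (∫ r in Ioi R, r ^ ((1:ℝ) - m)) := by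
        refine (ofReal_integral_eq_lintegral_ofReal (integrableOn_Ioi_rpow_of_lt hs hR) ?_).symm
        filter_upwards [ae_restrict_mem measurableSet_Ioi] with r hr
        exact rpow_nonneg (le_of_lt (lt_trans hR hr)) _
    _ ≤ ENNReal.ofReal (R ^ ((2:ℝ) - m) / ((m:ℝ) - 2)) := by
        rw [integral_Ioi_rpow_of_lt hs hR]
        refine ENNReal.ofReal_le_ofReal (le_of_eq ?_)
        have h21 : (1:ℝ) - m + 1 = 2 - m := by ring
        have hm2 : (m:ℝ) - 2 ≠ 0 := by linarith
        have h2m : (2:ℝ) - m ≠ 0 := by linarith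
        rw [h21, div_eq_div_iff h2m hm2]
        ring

lemma lint_shift (x' : ℂ) (f : ℂ → ℝ≥0∞) (r : ℝ) :
    ∫⁻ y in Metric.ball (0:ℂ) r, f (x' - y) = ∫⁻ z in Metric.ball x' r, f z := by
  have hmp : MeasurePreserving (fun y : ℂ => x' - y) volume volume :=
    Measure.measurePreserving_sub_left volume x'
  have hemb : MeasurableEmbedding (fun y : ℂ => x' - y) :=
    (MeasurableEquiv.subLeft x').measurableEmbedding
  have hpre : (fun y : ℂ => x' - y) ⁻¹' (Metric.ball x' r) = Metric.ball (0:ℂ) r := by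
    ext y
    simp [Metric.mem_ball, Complex.dist_eq]
  rw [← hpre, hmp.setLIntegral_comp_preimage_emb hemb]

lemma kernel_abs_bound (m : ℕ) (hm : 0 < m) (Km : ℂ → ℂ → ℂ)
    (hKm : ∀ x y, Km x y = (1 / (m : ℂ)) * ∑ i ∈ Finset.range m,
      (1 / (2 * (π : ℂ))) *
        (Complex.I * (x - Complex.exp (2 * π * Complex.I * (i + 1) / m) * y)) /
        ((‖x - Complex.exp (2 * π * Complex.I * (i + 1) / m) * y‖ ^ 2 : ℝ) : ℂ))
    (x y : ℂ) :
    ‖Km x y‖ ≤ (1/(m:ℝ)) * ∑ i ∈ Finset.range m,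
      (1/(2*π)) * (‖x - Complex.exp (2 * π * Complex.I * (i + 1) / m) * y‖)⁻¹ := by
  have hπ := Real.pi_pos
  rw [hKm x y, norm_mul]
  have h1 : ‖1/(m:ℂ)‖ = 1/(m:ℝ) := by
    rw [norm_div, norm_one, Complex.norm_natCast]
  rw [h1]
  refine mul_le_mul_of_nonneg_left ?_ (by positivity)
  refine le_trans (norm_sum_le _ _) (Finset.sum_le_sum ?_)
  intro i _
  set z := x - Complex.exp (2 * π * Complex.I * (i + 1) / m) * y with hz
  set r := ‖z‖ with hr
  have habs : ‖1/(2*(π:ℂ)) * (Complex.I * z) / ((r^2 : ℝ):ℂ)‖ =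
      1/(2*π) * r / r^2 := by
    rw [norm_div, norm_mul, norm_mul, Complex.norm_I, one_mul, norm_div, norm_one]
    have h2 : (2*(π:ℂ)) = ((2*π:ℝ):ℂ) := by push_cast; ring
    rw [h2, Complex.norm_real, Real.norm_eq_abs, abs_of_nonneg (by positivity), Complex.norm_real, Real.norm_eq_abs,
      abs_of_nonneg (sq_nonneg r)]
  rw [habs, mul_div_assoc]
  refine mul_le_mul_of_nonneg_left ?_ (by positivity)
  rcases eq_or_ne r 0 with h | h
  · simp [h]
  · rw [sq, ← div_div, div_self h, one_div]

set_option maxHeartbeats 2000000 in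
theorem stmt16 (m : ℕ) (hm : 3 ≤ m) (Cm W : ℝ)
    (ω : ℂ → ℝ) (hbdd : ∀ y, |ω y| ≤ W)
    (hmeas : Measurable ω)
    (hsym : ∀ y, ω (Complex.exp (2 * π * Complex.I / m) * y) = ω y)
    (hlim : Tendsto ω (nhdsWithin 0 {0}ᶜ) (nhds 0))
    (Km : ℂ → ℂ → ℂ)
    (hKm : ∀ x y, Km x y = (1 / (m : ℂ)) * ∑ i ∈ Finset.range m,
      (1 / (2 * (π : ℂ))) *
        (Complex.I * (x - Complex.exp (2 * π * Complex.I * (i + 1) / m) * y)) /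
        ((‖x - Complex.exp (2 * π * Complex.I * (i + 1) / m) * y‖ ^ 2 : ℝ) : ℂ))
    (hdecay : ∀ x y : ℂ, 2 * ‖x‖ ≤ ‖y‖ →
      ‖Km x y‖ ≤ Cm * (‖x‖) ^ (m - 1) / (‖y‖) ^ m)
    (u : ℂ → ℂ)
    (hu : ∀ x, u x = ∫ y, Km x y * (ω y : ℂ)) :
    Tendsto (fun x => ‖u x‖ / ‖x‖)
      (nhdsWithin 0 {0}ᶜ) (nhds 0) := by
  have hπ : 0 < π := Real.pi_pos
  have hm0 : 0 < m := by omega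
  have hW0 : 0 ≤ W := le_trans (abs_nonneg _) (hbdd 0)
  have hCm0 : 0 ≤ Cm := by
    have h2 : 2 * ‖(1:ℂ)‖ ≤ ‖(2:ℂ)‖ := by
      rw [norm_one, Complex.norm_two]; norm_num
    have h3 := le_trans (norm_nonneg _) (hdecay 1 2 h2)
    rw [norm_one, one_pow, Complex.norm_two, mul_one] at h3
    have h4 := mul_nonneg h3 (le_of_lt (pow_pos (zero_lt_two (α := ℝ)) m))
    rwa [div_mul_cancel₀ _ (ne_of_gt (pow_pos (zero_lt_two (α := ℝ)) m))] at h4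
  rw [Metric.tendsto_nhdsWithin_nhds]
  intro ε hε
  set ε₁ := ε / (2*(4 + 2*π*Cm)) with hε₁def
  have hden : 0 < 2*(4 + 2*π*Cm) := by nlinarith
  have hε₁ : 0 < ε₁ := div_pos hε hden
  obtain ⟨δ₀, hδ₀, hω⟩ := Metric.tendsto_nhdsWithin_nhds.1 hlim ε₁ hε₁
  set D := Cm * W * (2*π) * (δ₀ ^ ((2:ℝ) - m) / ((m:ℝ) - 2)) with hDdef
  have hm2 : (1:ℝ) ≤ (m:ℝ) - 2 := by
    have : (3:ℝ) ≤ m := by exact_mod_cast hm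
    linarith
  have hD0 : 0 ≤ D := by
    refine mul_nonneg (mul_nonneg (mul_nonneg hCm0 hW0) (by positivity)) ?_
    exact div_nonneg (rpow_nonneg hδ₀.le _) (by linarith)
  refine ⟨min (min (δ₀/2) 1) (ε/(2*(D+1))), by positivity, ?_⟩
  intro x hx hxd
  have hx0 : x ≠ 0 := hx
  have hax : 0 < ‖x‖ := norm_pos_iff.2 hx0
  rw [Complex.dist_eq, sub_zero] at hxd
  have hx1 : ‖x‖ < δ₀/2 := lt_of_lt_of_le hxd (le_trans (min_le_left _ _) (min_le_left _ _))
  have hx2 : ‖x‖ ≤ 1 := le_of_lt (lt_of_lt_of_le hxd (le_trans (min_le_left _ _) (min_le_right _ _)))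
  have hx3 : ‖x‖ < ε/(2*(D+1)) := lt_of_lt_of_le hxd (min_le_right _ _)
  have h2xδ : 2 * ‖x‖ < δ₀ := by linarith
  -- the main integral estimate
  have hubound : ‖u x‖ ≤ 3*ε₁*‖x‖ + 2*π*Cm*ε₁*‖x‖
      + D*(‖x‖)^2 := by
    set a := ‖x‖ with hadef
    set B := Metric.ball (0:ℂ) (2*a) with hBdef
    set c : ℕ → ℂ := fun i => Complex.exp (2 * π * Complex.I * (i + 1) / m) with hcdef
    have hc1 : ∀ i : ℕ, ‖c i‖ = 1 := by
      intro i
      have he : (2 * (π:ℂ) * Complex.I * ((i:ℂ) + 1) / (m:ℂ))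
          = ((2*π*((i:ℝ)+1)/m : ℝ):ℂ) * Complex.I := by push_cast; ring
      rw [hcdef]
      simp only
      rw [he, Complex.norm_exp_ofReal_mul_I]
    have hc0 : ∀ i : ℕ, c i ≠ 0 := fun i => Complex.exp_ne_zero _
    have hmr : (m:ℝ) ≠ 0 := Nat.cast_ne_zero.2 (by omega)
    have hne0 : ∀ᵐ (y:ℂ) ∂(volume : Measure ℂ), y ≠ 0 := by
      rw [ae_iff]
      have hset : {y : ℂ | ¬ y ≠ 0} = {0} := by ext y; simp
      rw [hset]
      exact measure_singleton 0
    have hKb := kernel_abs_bound m hm0 Km hKm x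
    have hinner : ∫⁻ y in B, ENNReal.ofReal ‖Km x y * (ω y:ℂ)‖ ≤
        ENNReal.ofReal (3*ε₁*a) := by
      have hstep1 : ∫⁻ y in B, ENNReal.ofReal ‖Km x y * (ω y:ℂ)‖ ≤
          ∫⁻ y in B, ENNReal.ofReal (ε₁ * ((1/(m:ℝ)) * ∑ i ∈ Finset.range m,
            (1/(2*π)) * (‖x - c i * y‖)⁻¹)) := by
        refine lintegral_mono_ae ?_
        filter_upwards [ae_restrict_mem measurableSet_ball, ae_restrict_of_ae hne0]
          with y hyB hy0
        refine ENNReal.ofReal_le_ofReal ?_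
        rw [norm_mul, Complex.norm_real, Real.norm_eq_abs]
        have hω' : |ω y| ≤ ε₁ := by
          refine le_of_lt ?_
          have hd : dist y 0 < δ₀ := lt_trans (Metric.mem_ball.1 hyB) h2xδ
          have := hω (by simpa using hy0) hd
          rwa [Real.dist_eq, sub_zero] at this
        have hsum0 : 0 ≤ (1/(m:ℝ)) * ∑ i ∈ Finset.range m,
            (1/(2*π)) * (‖x - c i * y‖)⁻¹ := by positivity
        calc ‖Km x y‖ * |ω y|
            ≤ ((1/(m:ℝ)) * ∑ i ∈ Finset.range m,
              (1/(2*π)) * (‖x - c i * y‖)⁻¹) * ε₁ :=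
              mul_le_mul (hKb y) hω' (abs_nonneg _) hsum0
          _ = ε₁ * ((1/(m:ℝ)) * ∑ i ∈ Finset.range m,
              (1/(2*π)) * (‖x - c i * y‖)⁻¹) := mul_comm _ _
      refine le_trans hstep1 ?_
      have hof : ∀ y : ℂ, ENNReal.ofReal (ε₁ * ((1/(m:ℝ)) * ∑ i ∈ Finset.range m,
            (1/(2*π)) * (‖x - c i * y‖)⁻¹))
          = ENNReal.ofReal ε₁ * (ENNReal.ofReal (1/(m:ℝ)) * ∑ i ∈ Finset.range m,
            ENNReal.ofReal ((1/(2*π)) * (‖x - c i * y‖)⁻¹)) := by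
        intro y
        rw [ENNReal.ofReal_mul hε₁.le, ENNReal.ofReal_mul (by positivity : (0:ℝ) ≤ 1/(m:ℝ)),
          ENNReal.ofReal_sum_of_nonneg (fun i _ => by positivity)]
      simp_rw [hof]
      rw [lintegral_const_mul' _ _ ENNReal.ofReal_ne_top,
        lintegral_const_mul' _ _ ENNReal.ofReal_ne_top]
      have hmeasi : ∀ i ∈ Finset.range m, Measurable (fun y : ℂ =>
          ENNReal.ofReal ((1/(2*π)) * (‖x - c i * y‖)⁻¹)) := by
        intro i _
        refine Measurable.ennreal_ofReal ?_
        refine Measurable.const_mul ?_ _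
        exact (continuous_norm.comp
          (continuous_const.sub (continuous_mul_left (c i)))).measurable.inv
      rw [lintegral_finset_sum _ hmeasi]
      have hper : ∀ i ∈ Finset.range m, ∫⁻ y in B,
          ENNReal.ofReal ((1/(2*π)) * (‖x - c i * y‖)⁻¹)
          ≤ ENNReal.ofReal (3*a) := by
        intro i _
        have hrw : ∀ y : ℂ, ‖x - c i * y‖ = ‖(c i)⁻¹ * x - y‖ := by
          intro y
          have hxy : x - c i * y = c i * ((c i)⁻¹ * x - y) := by
            rw [mul_sub, ← mul_assoc, mul_inv_cancel₀ (hc0 i), one_mul]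
          rw [hxy, norm_mul, hc1 i, one_mul]
        calc ∫⁻ y in B, ENNReal.ofReal ((1/(2*π)) * (‖x - c i * y‖)⁻¹)
            = ∫⁻ y in B, ENNReal.ofReal (1/(2*π)) *
                ENNReal.ofReal ((‖(c i)⁻¹ * x - y‖)⁻¹) := by
              refine lintegral_congr fun y => ?_
              rw [hrw y, ENNReal.ofReal_mul (by positivity)]
          _ = ENNReal.ofReal (1/(2*π)) *
                ∫⁻ y in B, ENNReal.ofReal ((‖(c i)⁻¹ * x - y‖)⁻¹) :=
              lintegral_const_mul' _ _ ENNReal.ofReal_ne_top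
          _ ≤ ENNReal.ofReal (1/(2*π)) *
                (ENNReal.ofReal (2*π) * ENNReal.ofReal (3*a)) := by
              refine mul_le_mul_right ?_ _
              rw [hBdef, lint_shift ((c i)⁻¹ * x)
                (fun z => ENNReal.ofReal (‖z‖)⁻¹) (2*a)]
              refine le_trans (lintegral_mono_set ?_) (lint_ball (3*a))
              intro z hz
              rw [Metric.mem_ball, Complex.dist_eq] at hz
              rw [Metric.mem_ball, Complex.dist_eq, sub_zero]
              have haxi : ‖(c i)⁻¹ * x‖ = a := by
                rw [norm_mul, norm_inv, hc1 i, inv_one, one_mul]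
              calc ‖z‖ = ‖(z - (c i)⁻¹*x) + (c i)⁻¹*x‖ := by
                    congr 1; ring
                _ ≤ ‖z - (c i)⁻¹*x‖ + ‖(c i)⁻¹*x‖ :=
                    norm_add_le _ _
                _ < 2*a + a := by rw [haxi]; exact add_lt_add_left hz a
                _ = 3*a := by ring
          _ = ENNReal.ofReal (3*a) := by
              rw [← ENNReal.ofReal_mul (by positivity), ← ENNReal.ofReal_mul (by positivity)]
              congr 1
              field_simp
      calc ENNReal.ofReal ε₁ * (ENNReal.ofReal (1/(m:ℝ)) * ∑ i ∈ Finset.range m,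
            ∫⁻ y in B, ENNReal.ofReal ((1/(2*π)) * (‖x - c i * y‖)⁻¹))
          ≤ ENNReal.ofReal ε₁ * (ENNReal.ofReal (1/(m:ℝ)) * ∑ _i ∈ Finset.range m,
            ENNReal.ofReal (3*a)) :=
            mul_le_mul_right (mul_le_mul_right (Finset.sum_le_sum hper) _) _
        _ = ENNReal.ofReal (3*ε₁*a) := by
            rw [Finset.sum_const, Finset.card_range, nsmul_eq_mul, ← ENNReal.ofReal_natCast,
              ← ENNReal.ofReal_mul (by positivity : (0:ℝ) ≤ (m:ℝ)),
              ← ENNReal.ofReal_mul (by positivity : (0:ℝ) ≤ 1/(m:ℝ)),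
              ← ENNReal.ofReal_mul hε₁.le]
            congr 1
            field_simp
    have houter : ∫⁻ y in Bᶜ, ENNReal.ofReal ‖Km x y * (ω y:ℂ)‖ ≤
        ENNReal.ofReal (2*π*Cm*ε₁*a) + ENNReal.ofReal (D*a^2) := by
      have hsplit : Bᶜ ⊆ (Metric.ball (0:ℂ) δ₀ ∩ Bᶜ) ∪ (Metric.ball (0:ℂ) δ₀)ᶜ := by
        intro y hy
        by_cases h : y ∈ Metric.ball (0:ℂ) δ₀
        · exact Or.inl ⟨h, hy⟩
        · exact Or.inr h
      refine le_trans (lintegral_mono_set hsplit)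
        (le_trans (lintegral_union_le _ _ _) (add_le_add ?_ ?_))
      · -- middle region
        have hK0 : 0 ≤ Cm * a^(m-1) * ε₁ := by positivity
        calc ∫⁻ y in Metric.ball (0:ℂ) δ₀ ∩ Bᶜ, ENNReal.ofReal ‖Km x y * (ω y:ℂ)‖
            ≤ ∫⁻ y in Metric.ball (0:ℂ) δ₀ ∩ Bᶜ,
              ENNReal.ofReal ((Cm * a^(m-1) * ε₁) * ((‖y‖ ^ m)⁻¹)) := by
              refine lintegral_mono_ae ?_
              filter_upwards [ae_restrict_mem (measurableSet_ball.inter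
                measurableSet_ball.compl)] with y hy
              obtain ⟨hy1, hy2⟩ := hy
              have hyge : 2*a ≤ ‖y‖ := by
                rw [hBdef] at hy2
                simpa [Metric.mem_ball, Complex.dist_eq, not_lt] using hy2
              have hy0 : y ≠ 0 := by
                intro h
                rw [h, norm_zero] at hyge
                nlinarith
              have hylt : ‖y‖ < δ₀ := by
                simpa [Metric.mem_ball, Complex.dist_eq] using hy1
              have hω' : |ω y| ≤ ε₁ := by
                refine le_of_lt ?_
                have := hω (by simpa using hy0) (by rwa [Complex.dist_eq, sub_zero])
                rwa [Real.dist_eq, sub_zero] at this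
              refine ENNReal.ofReal_le_ofReal ?_
              rw [norm_mul, Complex.norm_real, Real.norm_eq_abs]
              calc ‖Km x y‖ * |ω y|
                  ≤ (Cm * a^(m-1) / (‖y‖)^m) * ε₁ :=
                    mul_le_mul (hdecay x y hyge) hω' (abs_nonneg _)
                      (div_nonneg (by positivity) (by positivity))
                _ = (Cm * a^(m-1) * ε₁) * ((‖y‖ ^ m)⁻¹) := by ring
          _ = ENNReal.ofReal (Cm * a^(m-1) * ε₁) * ∫⁻ y in Metric.ball (0:ℂ) δ₀ ∩ Bᶜ,
              ENNReal.ofReal ((‖y‖ ^ m)⁻¹) := by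
              simp_rw [ENNReal.ofReal_mul hK0]
              exact lintegral_const_mul' _ _ ENNReal.ofReal_ne_top
          _ ≤ ENNReal.ofReal (Cm * a^(m-1) * ε₁) * ∫⁻ y in Bᶜ,
              ENNReal.ofReal ((‖y‖ ^ m)⁻¹) :=
              mul_le_mul_right (lintegral_mono_set inter_subset_right) _
          _ ≤ ENNReal.ofReal (Cm * a^(m-1) * ε₁) *
              (ENNReal.ofReal (2*π) * ENNReal.ofReal ((2*a) ^ ((2:ℝ)-m) / ((m:ℝ)-2))) :=
              mul_le_mul_right (lint_compl (2*a) (by positivity) m hm) _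
          _ ≤ ENNReal.ofReal (2*π*Cm*ε₁*a) := by
              rw [← ENNReal.ofReal_mul (by positivity),
                ← ENNReal.ofReal_mul hK0]
              refine ENNReal.ofReal_le_ofReal ?_
              have hxpow : a^(m-1) * (2*a) ^ ((2:ℝ)-m) ≤ a := by
                rw [mul_rpow (by norm_num : (0:ℝ) ≤ 2) hax.le]
                have h2s : (2:ℝ)^((2:ℝ)-m) ≤ 1 :=
                  rpow_le_one_of_one_le_of_nonpos one_le_two (by linarith)
                have hnpow : a^(m-1) = a ^ (((m:ℝ)-1)) := by
                  rw [← rpow_natCast a (m-1)]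
                  congr 1
                  push_cast [Nat.cast_sub (by omega : 1 ≤ m)]
                  ring
                calc a^(m-1) * ((2:ℝ)^((2:ℝ)-m) * a^((2:ℝ)-m))
                    = (2:ℝ)^((2:ℝ)-m) * (a^(((m:ℝ)-1)) * a^((2:ℝ)-m)) := by
                      rw [hnpow]; ring
                  _ = (2:ℝ)^((2:ℝ)-m) * a^((((m:ℝ)-1)) + ((2:ℝ)-m)) := by
                      rw [← rpow_add hax]
                  _ = (2:ℝ)^((2:ℝ)-m) * a := by
                      norm_num
                  _ ≤ 1 * a := mul_le_mul_of_nonneg_right h2s hax.le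
                  _ = a := one_mul a
              calc Cm * a^(m-1) * ε₁ * (2*π * ((2*a) ^ ((2:ℝ)-m) / ((m:ℝ)-2)))
                  = (2*π*Cm*ε₁) * ((a^(m-1) * (2*a) ^ ((2:ℝ)-m)) * ((m:ℝ)-2)⁻¹) := by
                    ring
                _ ≤ (2*π*Cm*ε₁) * (a * 1) := by
                    refine mul_le_mul_of_nonneg_left ?_ (by positivity)
                    refine mul_le_mul hxpow ?_ (inv_nonneg.2 (by linarith)) hax.le
                    exact inv_le_one_of_one_le₀ hm2
                _ = 2*π*Cm*ε₁*a := by ring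
      · -- tail region
        have hK0 : 0 ≤ Cm * a^(m-1) * W := by positivity
        calc ∫⁻ y in (Metric.ball (0:ℂ) δ₀)ᶜ, ENNReal.ofReal ‖Km x y * (ω y:ℂ)‖
            ≤ ∫⁻ y in (Metric.ball (0:ℂ) δ₀)ᶜ,
              ENNReal.ofReal ((Cm * a^(m-1) * W) * ((‖y‖ ^ m)⁻¹)) := by
              refine lintegral_mono_ae ?_
              filter_upwards [ae_restrict_mem measurableSet_ball.compl] with y hy
              have hyge : δ₀ ≤ ‖y‖ := by
                simpa [Metric.mem_ball, Complex.dist_eq, not_lt] using hy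
              have hyge2 : 2*a ≤ ‖y‖ := by linarith
              refine ENNReal.ofReal_le_ofReal ?_
              rw [norm_mul, Complex.norm_real, Real.norm_eq_abs]
              calc ‖Km x y‖ * |ω y|
                  ≤ (Cm * a^(m-1) / (‖y‖)^m) * W :=
                    mul_le_mul (hdecay x y hyge2) (hbdd y) (abs_nonneg _)
                      (div_nonneg (by positivity) (by positivity))
                _ = (Cm * a^(m-1) * W) * ((‖y‖ ^ m)⁻¹) := by ring
          _ = ENNReal.ofReal (Cm * a^(m-1) * W) * ∫⁻ y in (Metric.ball (0:ℂ) δ₀)ᶜ,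
              ENNReal.ofReal ((‖y‖ ^ m)⁻¹) := by
              simp_rw [ENNReal.ofReal_mul hK0]
              exact lintegral_const_mul' _ _ ENNReal.ofReal_ne_top
          _ ≤ ENNReal.ofReal (Cm * a^(m-1) * W) *
              (ENNReal.ofReal (2*π) * ENNReal.ofReal (δ₀ ^ ((2:ℝ)-m) / ((m:ℝ)-2))) :=
              mul_le_mul_right (lint_compl δ₀ hδ₀ m hm) _
          _ ≤ ENNReal.ofReal (D*a^2) := by
              rw [← ENNReal.ofReal_mul (by positivity), ← ENNReal.ofReal_mul hK0]
              refine ENNReal.ofReal_le_ofReal ?_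
              have hpow2 : a^(m-1) ≤ a^2 :=
                pow_le_pow_of_le_one (norm_nonneg _) hx2 (by omega)
              calc Cm * a^(m-1) * W * (2*π * (δ₀ ^ ((2:ℝ)-m) / ((m:ℝ)-2)))
                  = (Cm * W * (2*π) * (δ₀ ^ ((2:ℝ)-m) / ((m:ℝ)-2))) * a^(m-1) := by ring
                _ ≤ (Cm * W * (2*π) * (δ₀ ^ ((2:ℝ)-m) / ((m:ℝ)-2))) * a^2 := by
                    refine mul_le_mul_of_nonneg_left hpow2 ?_
                    rw [← hDdef]
                    exact hD0
                _ = D*a^2 := by rw [← hDdef]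
    calc ‖u x‖
        ≤ (∫⁻ y, ENNReal.ofReal ‖Km x y * (ω y:ℂ)‖).toReal := by
          rw [hu x]
          exact norm_integral_le_lintegral_norm _
      _ ≤ 3*ε₁*a + 2*π*Cm*ε₁*a + D*a^2 := by
          refine ENNReal.toReal_le_of_le_ofReal (by positivity) ?_
          rw [← lintegral_add_compl (fun y => ENNReal.ofReal ‖Km x y * (ω y:ℂ)‖)
            (measurableSet_ball (x := (0:ℂ)) (ε := 2*a))]
          calc (∫⁻ y in B, ENNReal.ofReal ‖Km x y * (ω y:ℂ)‖)
                + ∫⁻ y in Bᶜ, ENNReal.ofReal ‖Km x y * (ω y:ℂ)‖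
              ≤ ENNReal.ofReal (3*ε₁*a) +
                (ENNReal.ofReal (2*π*Cm*ε₁*a) + ENNReal.ofReal (D*a^2)) :=
                add_le_add hinner houter
            _ = ENNReal.ofReal (3*ε₁*a + 2*π*Cm*ε₁*a + D*a^2) := by
                rw [← ENNReal.ofReal_add (by positivity) (by positivity),
                  ← ENNReal.ofReal_add (by positivity) (by positivity)]
                ring_nf
  -- conclude
  rw [Real.dist_eq, sub_zero, abs_of_nonneg (div_nonneg (norm_nonneg _) (norm_nonneg _))]
  have hquot : ‖u x‖ / ‖x‖ ≤ 3*ε₁ + 2*π*Cm*ε₁ + D*‖x‖ := by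
    rw [div_le_iff₀ hax]
    calc ‖u x‖ ≤ 3*ε₁*‖x‖ + 2*π*Cm*ε₁*‖x‖
        + D*(‖x‖)^2 := hubound
      _ = (3*ε₁ + 2*π*Cm*ε₁ + D*‖x‖) * ‖x‖ := by ring
  refine lt_of_le_of_lt hquot ?_
  have hpart1 : 3*ε₁ + 2*π*Cm*ε₁ < ε/2 := by
    have : ε₁ * (2*(4 + 2*π*Cm)) = ε := div_mul_cancel₀ ε (ne_of_gt hden)
    nlinarith
  have hpart2 : D * ‖x‖ ≤ ε/2 := by
    have hD1 : 0 < D + 1 := by linarith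
    have h1 : D * ‖x‖ ≤ D * (ε/(2*(D+1))) :=
      mul_le_mul_of_nonneg_left hx3.le hD0
    have h2 : D * (ε/(2*(D+1))) ≤ ε/2 := by
      rw [← mul_div_assoc, div_le_div_iff₀ (by positivity) (by norm_num : (0:ℝ) < 2)]
      nlinarith
    linarith
  linarith
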